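/- If s is a largest starting time from (α,u) to (ω,v) (i.e., the maximum of first coordinates over SA((α,u),(ω,v))) and a is the minimal arrival time among paths from (α,u) to (ω,v) starting at s, then either a − s = ℓ((α,u),(ω,v)), or there exists a pair (s',a') ∈ SA((α,u),(ω,v)) with a' < a and a' − s' = ℓ((α,u),(ω,v)). -/

import Mathlib

/-- A temporal walk in a link stream: each step `(t, w)` means traversing the
temporal edge `(t, current, w)`. -/
def IsWalk {V : Type*} (E : Set (ℝ × V × V)) : V → List (ℝ × V) → V → Prop
  | u, [], v => u = v
  | u, (t, w) :: rest, v => (t, u, w) ∈ E ∧ IsWalk E w rest v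

/-- A (time-respecting) path in the link stream from `(α, u)` to `(ω, v)`. -/
def IsPath {V : Type*} (E : Set (ℝ × V × V)) (α : ℝ) (u : V) (ω : ℝ) (v : V)
    (L : List (ℝ × V)) : Prop :=
  α ≤ ω ∧ IsWalk E u L v ∧ List.Chain' (· ≤ ·) (L.map Prod.fst) ∧
    ∀ p ∈ L, α ≤ p.1 ∧ p.1 ≤ ω

/-- Starting time of a (nonempty) path. -/
noncomputable def sTime {V : Type*} (L : List (ℝ × V)) : ℝ := (L.map Prod.fst).headI

/-- Arrival time of a (nonempty) path. -/
noncomputable def aTime {V : Type*} (L : List (ℝ × V)) : ℝ := (L.map Prod.fst).getLastI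

/-- `(ω, v)` is reachable from `(α, u)`. -/
def Reach {V : Type*} (E : Set (ℝ × V × V)) (α : ℝ) (u : V) (ω : ℝ) (v : V) : Prop :=
  ∃ L, IsPath E α u ω v L

/-- The distance: minimal number of edges of a path from `(α,u)` to `(ω,v)`. -/
noncomputable def tdist {V : Type*} (E : Set (ℝ × V × V)) (α : ℝ) (u : V) (ω : ℝ) (v : V) : ℕ :=
  sInf {n | ∃ L, IsPath E α u ω v L ∧ L.length = n}

/-- The latency: minimal duration of a path from `(α,u)` to `(ω,v)`. -/
noncomputable def lat {V : Type*} (E : Set (ℝ × V × V)) (α : ℝ) (u : V) (ω : ℝ) (v : V) : ℝ :=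
  sInf {d | ∃ L, IsPath E α u ω v L ∧ aTime L - sTime L = d}

/-- The sf-metric: minimal length among fastest paths from `(α,u)` to `(ω,v)`. -/
noncomputable def sfm {V : Type*} (E : Set (ℝ × V × V)) (α : ℝ) (u : V) (ω : ℝ) (v : V) : ℕ :=
  sInf {n | ∃ L, IsPath E α u ω v L ∧ aTime L - sTime L = lat E α u ω v ∧ L.length = n}


private lemma walk_times {V : Type*} (E : Set (ℝ × V × V)) :
    ∀ (u : V) (L : List (ℝ × V)) (v : V), IsWalk E u L v →
      ∀ q ∈ L, q.1 ∈ Prod.fst '' E := by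
  intro u L
  induction L generalizing u with
  | nil => intro v _ q hq; simp at hq
  | cons a rest ih =>
    intro v hw q hq
    obtain ⟨t, w⟩ := a
    obtain ⟨he, hw'⟩ := hw
    rcases List.mem_cons.mp hq with rfl | hq
    · exact ⟨(t, u, w), he, rfl⟩
    · exact ih w v hw' q hq

/-- If `smax` is the largest starting time over `SA((α,u),(ω,v))` and `amin` the minimal
arrival time among paths starting at `smax`, then either `amin − smax` is the latency, or
some pair `(s',a') ∈ SA` with `a' < amin` realizes the latency. -/
theorem largest_start_latency_dichotomy {V : Type*} (E : Set (ℝ × V × V)) (hE : E.Finite)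
    (α ω : ℝ) (u v : V) (SA : Set (ℝ × ℝ))
    (hSA : SA = {p | ∃ L, IsPath E α u ω v L ∧ L ≠ [] ∧ sTime L = p.1 ∧ aTime L = p.2})
    (hne : SA.Nonempty) (smax amin : ℝ)
    (hs : IsGreatest (Prod.fst '' SA) smax)
    (ha : IsLeast {a | (smax, a) ∈ SA} amin) :
    amin - smax = sInf {d | ∃ p ∈ SA, p.2 - p.1 = d} ∨
      ∃ p ∈ SA, p.2 < amin ∧ p.2 - p.1 = sInf {d | ∃ p ∈ SA, p.2 - p.1 = d} := by

  classical
  set Dset := {d | ∃ p ∈ SA, p.2 - p.1 = d} with hD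
  -- SA is finite
  have hTfin : (Prod.fst '' E).Finite := hE.image _
  have hSAsub : SA ⊆ (Prod.fst '' E) ×ˢ (Prod.fst '' E) := by
    intro p hp
    rw [hSA] at hp
    obtain ⟨L, hL, hLne, hsT, haT⟩ := hp
    have hmem : ∀ q ∈ L, q.1 ∈ Prod.fst '' E := walk_times E u L v hL.2.1
    obtain ⟨a, rest, rfl⟩ := List.exists_cons_of_ne_nil hLne
    constructor
    · have : sTime (a :: rest) = a.1 := by simp [sTime]
      rw [← hsT, this]
      exact hmem a List.mem_cons_self
    · have hlast : aTime (a :: rest) = ((a :: rest).map Prod.fst).getLast (by simp) := by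
        simp [aTime, List.getLastI_eq_getLast?, List.getLast?_eq_getLast]
      rw [← haT, hlast]
      have := List.getLast_mem (l := (a :: rest).map Prod.fst) (by simp)
      rw [List.mem_map] at this
      obtain ⟨q, hq, hq2⟩ := this
      rw [← hq2]
      exact hmem q hq
  have hSAfin : SA.Finite := (hTfin.prod hTfin).subset hSAsub
  have hDeq : Dset = (fun p : ℝ × ℝ => p.2 - p.1) '' SA := by
    ext d; simp [hD, Set.mem_image]
  have hDfin : Dset.Finite := hDeq ▸ hSAfin.image _
  have hDne : Dset.Nonempty := by
    obtain ⟨p, hp⟩ := hne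
    exact ⟨p.2 - p.1, p, hp, rfl⟩
  have hbdd : BddBelow Dset := hDfin.bddBelow
  have hInfMem : sInf Dset ∈ Dset := hDne.csInf_mem hDfin
  obtain ⟨p, hpSA, hpeq⟩ := hInfMem
  rcases lt_or_ge p.2 amin with hlt | hge
  · exact Or.inr ⟨p, hpSA, hlt, hpeq⟩
  · left
    have h1 : sInf Dset ≤ amin - smax := csInf_le hbdd ⟨(smax, amin), ha.1, rfl⟩
    have hp1 : p.1 ≤ smax := hs.2 ⟨p, hpSA, rfl⟩
    have h2 : amin - smax ≤ p.2 - p.1 := by linarith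
    linarith
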